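/- Let u : ℝ² → ℝ be a C² function (coordinates (x,t)) that solves the double Burgers equation L_u(L_u u) = 0 on all of ℝ². Set A(c) := (L_u u)(c,0), B(c) := u(c,0), and x(c,t) := (A(c)/2)·t² + B(c)·t + c. Then for all c, t ∈ ℝ one has u(x(c,t), t) = A(c)·t + B(c). -/

import Mathlib

open Set

/-- The operator `L_u` acting on `v`:  `(L_u v)(x,t) = ∂v/∂t + u·∂v/∂x`,
with coordinates `(x,t)` on `ℝ × ℝ`. -/
noncomputable def Lop (u v : ℝ × ℝ → ℝ) : ℝ × ℝ → ℝ :=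
  fun p => fderiv ℝ v p (0, 1) + u p * fderiv ℝ v p (1, 0)

set_option maxHeartbeats 1000000 in
theorem stmt0 (u : ℝ × ℝ → ℝ) (hu : ContDiff ℝ 2 u)
    (hpde : ∀ p : ℝ × ℝ, Lop u (Lop u u) p = 0)
    (A B : ℝ → ℝ) (hA : ∀ c, A c = Lop u u (c, 0)) (hB : ∀ c, B c = u (c, 0))
    (X : ℝ → ℝ → ℝ) (hX : ∀ c t, X c t = A c / 2 * t ^ 2 + B c * t + c) :
    ∀ c t : ℝ, u (X c t, t) = A c * t + B c := by
  intro c t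
  set a := A c with ha'
  set b := B c with hb'
  have hu1 : ContDiff ℝ 1 u := hu.of_le (by norm_num)
  have hud : Differentiable ℝ u := hu1.differentiable one_ne_zero
  have hdu : ContDiff ℝ 1 (fderiv ℝ u) := hu.fderiv_right (by norm_num)
  have hLuuC : ContDiff ℝ 1 (Lop u u) := by
    unfold Lop
    exact (hdu.clm_apply contDiff_const).add (hu1.mul (hdu.clm_apply contDiff_const))
  have hLuud : Differentiable ℝ (Lop u u) := hLuuC.differentiable one_ne_zero
  set γ : ℝ → ℝ × ℝ := fun s => (X c s, s) with hγdef
  have hγ : ∀ s, HasDerivAt γ (a * s + b, 1) s := by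
    intro s
    apply HasDerivAt.prodMk _ (hasDerivAt_id s)
    have hfun : X c = fun r => a / 2 * r ^ 2 + b * r + c :=
      funext fun r => hX c r
    have h1 : HasDerivAt (fun r : ℝ => a / 2 * r ^ 2 + b * r + c)
        (a / 2 * (2 * s ^ 1) + b * 1) s :=
      (((hasDerivAt_pow 2 s).const_mul (a / 2)).add ((hasDerivAt_id s).const_mul b)).add_const c
    rw [hfun]
    refine h1.congr_deriv ?_
    ring
  have chain : ∀ (w : ℝ × ℝ → ℝ), Differentiable ℝ w → ∀ s : ℝ,
      HasDerivAt (fun r => w (γ r))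
        (fderiv ℝ w (γ s) (0, 1) + (a * s + b) * fderiv ℝ w (γ s) (1, 0)) s := by
    intro w hw s
    have h := (hw (γ s)).hasFDerivAt.comp_hasDerivAt s (hγ s)
    refine h.congr_deriv ?_
    have hvv : (a * s + b, (1 : ℝ)) = (0, 1) + (a * s + b) • ((1 : ℝ), (0 : ℝ)) := by
      simp [Prod.ext_iff]
    rw [hvv, map_add, map_smul, smul_eq_mul]
  set α : ℝ → ℝ := fun s => fderiv ℝ u (γ s) (1, 0) with hαdef
  set β : ℝ → ℝ := fun s => fderiv ℝ (Lop u u) (γ s) (1, 0) with hβdef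
  set F : ℝ → ℝ × ℝ := fun s => (u (γ s) - (a * s + b), Lop u u (γ s) - a) with hFdef
  set v : ℝ → ℝ × ℝ → ℝ × ℝ := fun s x => (x.2 - x.1 * α s, -(x.1 * β s)) with hvdef
  have hF' : ∀ s, HasDerivAt F (v s (F s)) s := by
    intro s
    have h1 : HasDerivAt (fun r => u (γ r) - (a * r + b)) ((v s (F s)).1) s := by
      have hd := (chain u hud s).sub (((hasDerivAt_id s).const_mul a).add_const b)
      refine hd.congr_deriv (Eq.symm ?_)
      show Lop u u (γ s) - a - (u (γ s) - (a * s + b)) * fderiv ℝ u (γ s) (1, 0) = _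
      simp only [Lop]
      ring
    have h2 : HasDerivAt (fun r => Lop u u (γ r) - a) ((v s (F s)).2) s := by
      have hd := (chain (Lop u u) hLuud s).sub_const a
      refine hd.congr_deriv (Eq.symm ?_)
      have hp := hpde (γ s)
      simp only [Lop] at hp
      show -((u (γ s) - (a * s + b)) * fderiv ℝ (Lop u u) (γ s) (1, 0)) = _
      nlinarith [hp]
    exact h1.prodMk h2
  -- set up the clamped field and uniqueness
  set T : ℝ := |t| + 1 with hTdef
  have hT0 : (0 : ℝ) < T := by positivity
  set τ : ℝ → ℝ := fun s => max (-T) (min T s) with hτdef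
  have hτmem : ∀ s, τ s ∈ Icc (-T) T := by
    intro s
    constructor
    · exact le_max_left _ _
    · exact max_le (by linarith) (min_le_left _ _)
  have hτeq : ∀ s ∈ Ioo (-T) T, τ s = s := by
    intro s hs
    simp only [hτdef]
    rw [min_eq_right hs.2.le, max_eq_right hs.1.le]
  have hcont : ContinuousOn (fun s => |α s| + |β s|) (Icc (-T) T) := by
    have hγc : Continuous γ := by
      apply Continuous.prodMk _ continuous_id
      have : X c = fun r => a / 2 * r ^ 2 + b * r + c :=
        funext fun r => hX c r
      rw [this]; continuity
    have hαc : Continuous α :=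
      (hdu.continuous.comp hγc).clm_apply continuous_const
    have hβc : Continuous β := by
      have hdL : Continuous (fderiv ℝ (Lop u u)) :=
        (hLuuC.fderiv_right (m := 0) (by norm_num)).continuous
      exact (hdL.comp hγc).clm_apply continuous_const
    exact (hαc.abs.add hβc.abs).continuousOn
  obtain ⟨C, hC⟩ := (isCompact_Icc (a := -T) (b := T)).exists_bound_of_continuousOn hcont
  have hC' : ∀ s ∈ Icc (-T) T, |α s| + |β s| ≤ C := by
    intro s hs
    have := hC s hs
    rwa [Real.norm_eq_abs, abs_of_nonneg (by positivity)] at this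
  have hC0 : 0 ≤ C := le_trans (by positivity) (hC' 0 ⟨by linarith, by linarith⟩)
  set K : NNReal := ⟨1 + C, by linarith⟩ with hKdef
  set w : ℝ → ℝ × ℝ → ℝ × ℝ := fun s x => v (τ s) x with hwdef
  have hlip : ∀ s, LipschitzWith K (w s) := by
    intro s
    apply LipschitzWith.of_dist_le_mul
    intro x y
    have hmem := hτmem s
    have hα1 : |α (τ s)| ≤ C := by
      have := hC' (τ s) hmem
      have hb := abs_nonneg (β (τ s))
      linarith
    have hβ1 : |β (τ s)| ≤ C := by
      have := hC' (τ s) hmem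
      have hb := abs_nonneg (α (τ s))
      linarith
    have hd1 : |x.1 - y.1| ≤ dist x y := by
      rw [← Real.dist_eq]; rw [Prod.dist_eq]; exact le_max_left _ _
    have hd2 : |x.2 - y.2| ≤ dist x y := by
      rw [← Real.dist_eq]; rw [Prod.dist_eq]; exact le_max_right _ _
    have hdnn : 0 ≤ dist x y := dist_nonneg
    have hKc : (K : ℝ) = 1 + C := rfl
    rw [hKc, Prod.dist_eq]
    apply max_le
    · rw [Real.dist_eq]
      show |(x.2 - x.1 * α (τ s)) - (y.2 - y.1 * α (τ s))| ≤ _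
      have : (x.2 - x.1 * α (τ s)) - (y.2 - y.1 * α (τ s))
          = (x.2 - y.2) - (x.1 - y.1) * α (τ s) := by ring
      rw [this]
      calc |(x.2 - y.2) - (x.1 - y.1) * α (τ s)|
          ≤ |x.2 - y.2| + |(x.1 - y.1) * α (τ s)| := abs_sub _ _
        _ = |x.2 - y.2| + |x.1 - y.1| * |α (τ s)| := by rw [abs_mul]
        _ ≤ dist x y + dist x y * C := by
            refine add_le_add hd2 ?_
            exact mul_le_mul hd1 hα1 (abs_nonneg _) hdnn
        _ = (1 + C) * dist x y := by ring
    · rw [Real.dist_eq]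
      show |(-(x.1 * β (τ s))) - (-(y.1 * β (τ s)))| ≤ _
      have : (-(x.1 * β (τ s))) - (-(y.1 * β (τ s))) = -((x.1 - y.1) * β (τ s)) := by ring
      rw [this, abs_neg, abs_mul]
      calc |x.1 - y.1| * |β (τ s)| ≤ dist x y * C :=
            mul_le_mul hd1 hβ1 (abs_nonneg _) hdnn
        _ ≤ (1 + C) * dist x y := by nlinarith
  have ht00 : (0 : ℝ) ∈ Ioo (-T) T := ⟨by linarith, hT0⟩
  have hFcont : ContinuousOn F (Icc (-T) T) := fun s _ =>
    ((hF' s).differentiableAt.continuousAt).continuousWithinAt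
  have hub : u (c, 0) = b := by rw [hb', hB]
  have hua : Lop u u (c, 0) = a := by rw [ha', hA]
  have heq0 : F 0 = (fun _ : ℝ => (0 : ℝ × ℝ)) 0 := by
    have hX0 : X c 0 = c := by rw [hX]; ring
    simp only [hFdef, hγdef, hX0, hub, hua]
    simp [hub, hua]
  have huniq := ODE_solution_unique_of_mem_Icc (v := w) (s := fun _ => (univ : Set (ℝ × ℝ)))
    (K := K) (fun s _ => (hlip s).lipschitzOnWith) ht00 hFcont
    (fun s hs => by
      simp only [hwdef]
      rw [hτeq s hs]
      exact hF' s)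
    (fun _ _ => mem_univ _) continuousOn_const
    (fun s hs => by
      have h0 : w s (0 : ℝ × ℝ) = 0 := by simp [hwdef, hvdef]
      rw [h0]
      exact hasDerivAt_const s 0)
    (fun _ _ => mem_univ _) heq0
  have htmem : t ∈ Icc (-T) T :=
    ⟨by have := neg_abs_le t; simp only [hTdef]; linarith,
     by have := le_abs_self t; simp only [hTdef]; linarith⟩
  have hFt := huniq htmem
  have h1 := congrArg Prod.fst hFt
  simp only [hFdef, hγdef] at h1
  have : u (X c t, t) - (a * t + b) = 0 := h1
  linarith
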